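/- In the biased Shapley game with bias η, the joint strategy δ* that places probability 1/6 on each of the six outcomes (1,1),(1,2),(2,2),(2,3),(3,1),(3,3) is a coarse correlated equilibrium if and only if η ≤ 1/2. -/

import Mathlib

open Finset

/-- Player 1's payoff matrix in the biased Shapley game. -/
noncomputable def shapleyA (η : ℝ) : Matrix (Fin 3) (Fin 3) ℝ :=
  !![1, 0, η; 0, 1, 0; 0, 0, 1]

/-- Player 2's payoff matrix in the biased Shapley game. -/
noncomputable def shapleyB (η : ℝ) : Matrix (Fin 3) (Fin 3) ℝ :=
  !![0, 1, η; 0, 0, 1; 1, 0, 0]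

/-- The joint strategy placing mass 1/6 on the six outcomes
(1,1),(1,2),(2,2),(2,3),(3,1),(3,3) (written 0-indexed). -/
noncomputable def deltaStar : Fin 3 × Fin 3 → ℝ := fun p =>
  if p ∈ ({(0, 0), (0, 1), (1, 1), (1, 2), (2, 0), (2, 2)} :
      Finset (Fin 3 × Fin 3)) then 1 / 6 else 0

/-- In the biased Shapley game with bias `η`, the joint strategy `δ*` is a coarse
correlated equilibrium if and only if `η ≤ 1/2`. -/
theorem deltaStar_cce_iff (η : ℝ) :
    ((∀ r : Fin 3,
        ∑ p : Fin 3 × Fin 3, deltaStar p * shapleyA η r p.2 ≤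
          ∑ p : Fin 3 × Fin 3, deltaStar p * shapleyA η p.1 p.2) ∧
      (∀ c : Fin 3,
        ∑ p : Fin 3 × Fin 3, deltaStar p * shapleyB η p.1 c ≤
          ∑ p : Fin 3 × Fin 3, deltaStar p * shapleyB η p.1 p.2)) ↔
    η ≤ 1 / 2 := by
  constructor
  · rintro ⟨h1, _⟩
    have := h1 0
    simp only [deltaStar, shapleyA, Fintype.sum_prod_type, Fin.sum_univ_succ,
      Fin.sum_univ_zero, Matrix.cons_val', Matrix.cons_val_zero, Matrix.cons_val_one,
      Matrix.head_cons, Matrix.empty_val', Matrix.cons_val_fin_one, Matrix.head_fin_const,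
      Finset.mem_insert, Finset.mem_singleton, Prod.mk.injEq] at this
    norm_num [Matrix.vecHead, Matrix.vecTail, Fin.ext_iff, Matrix.cons_val_two] at this
    linarith
  · intro hη
    constructor <;> intro i <;> fin_cases i <;>
      simp only [deltaStar, shapleyA, shapleyB, Fintype.sum_prod_type, Fin.sum_univ_succ,
        Fin.sum_univ_zero, Matrix.cons_val', Matrix.cons_val_zero, Matrix.cons_val_one,
        Matrix.head_cons, Matrix.empty_val', Matrix.cons_val_fin_one, Matrix.head_fin_const,
        Finset.mem_insert, Finset.mem_singleton, Prod.mk.injEq] <;>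
      norm_num [Matrix.vecHead, Matrix.vecTail, Fin.ext_iff, Matrix.cons_val_two] <;> linarith
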